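/- Let 1 ≤ u ≤ 2 with conjugate exponent u' (1/u + 1/u' = 1), and let E be a u-convex and u'-concave symmetric Banach sequence space. Then there is c > 0 with c^{-1} · n^{1/u}/‖Σ_{i=1}^n e_i‖_{E_n} ≤ ‖id: E_n → ℓ_u^n‖ ≤ c · n^{1/u}/‖Σ_{i=1}^n e_i‖_{E_n} for all n. If moreover E is 2-concave, then also ‖id: E_n → ℓ_u^n‖ ≍ n^{1/u − 1/2}/‖id: ℓ_2^n → E_n‖, i.e. there is c' > 0 with c'^{-1} · n^{1/u−1/2}/‖id: ℓ_2^n → E_n‖ ≤ ‖id: E_n → ℓ_u^n‖ ≤ c' · n^{1/u−1/2}/‖id: ℓ_2^n → E_n‖ for all n. -/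

import Mathlib

open scoped ENNReal NNReal BigOperators
open Filter

noncomputable section

/-- The ℓ^r-"sum" `(∑ |v i|^r)^(1/r)` of finitely many reals, with the
supremum `sup_i |v i|` for `r = ∞`. -/
def lpsum (r : ℝ≥0∞) {m : ℕ} (v : Fin m → ℝ) : ℝ :=
  if r = ∞ then ⨆ i, |v i| else (∑ i, |v i| ^ r.toReal) ^ (1 / r.toReal)

/-- The norm of `ℓ_u^n = (ℂ^n, ‖·‖_u)` (max-norm for `u = ∞`). -/
def lunorm (u : ℝ≥0∞) {n : ℕ} (x : Fin n → ℂ) : ℝ :=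
  lpsum u fun i => ‖x i‖

/-- Dual norm of a linear functional with respect to a given norm function. -/
def dualNorm {X : Type*} [AddCommGroup X] [Module ℂ X] (NX : X → ℝ) (f : X →ₗ[ℂ] ℂ) : ℝ :=
  sSup {t | ∃ x, NX x ≤ 1 ∧ t = ‖f x‖}

/-- Operator norm of a linear map with respect to given norm functions. -/
def opNorm {X Y : Type*} [AddCommGroup X] [Module ℂ X] [AddCommGroup Y] [Module ℂ Y]
    (NX : X → ℝ) (NY : Y → ℝ) (T : X →ₗ[ℂ] Y) : ℝ :=
  sSup {t | ∃ x, NX x ≤ 1 ∧ t = NY (T x)}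

/-- The weak-ℓ₂ norm `sup_{‖x'‖ ≤ 1} (∑_j |⟨x', x_j⟩|²)^{1/2}` of a finite family. -/
def weak2 {X : Type*} [AddCommGroup X] [Module ℂ X] (NX : X → ℝ) {m : ℕ}
    (x : Fin m → X) : ℝ :=
  sSup {t | ∃ f : X →ₗ[ℂ] ℂ, dualNorm NX f ≤ 1 ∧ t = lpsum 2 fun j => ‖f (x j)‖}

/-- The (r,2)-summing norm `π_{r,2}(T)`: the least `ρ ≥ 0` such that
`(∑ ‖T x_i‖^r)^{1/r} ≤ ρ · sup_{‖x'‖ ≤ 1} (∑ |⟨x', x_i⟩|²)^{1/2}`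
for all finite families, with sup-modification for `r = ∞`. -/
def summingNorm (r : ℝ≥0∞) {X Y : Type*} [AddCommGroup X] [Module ℂ X]
    [AddCommGroup Y] [Module ℂ Y] (NX : X → ℝ) (NY : Y → ℝ) (T : X →ₗ[ℂ] Y) : ℝ :=
  sInf {ρ | 0 ≤ ρ ∧ ∀ (m : ℕ) (x : Fin m → X),
    lpsum r (fun i => NY (T (x i))) ≤ ρ * weak2 NX x}

/-- The (s,2)-mixing norm `μ_{s,2}(T)`: the least `c ≥ 0` such that
`(∑_j (∑_i |⟨y'_i, T x_j⟩|^s)^{2/s})^{1/2} ≤ c · (∑_i ‖y'_i‖^s)^{1/s} ·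
 sup_{‖x'‖ ≤ 1} (∑_j |⟨x', x_j⟩|²)^{1/2}` for all finite families, with
sup-modification for `s = ∞`. -/
def mixingNorm (s : ℝ≥0∞) {X Y : Type*} [AddCommGroup X] [Module ℂ X]
    [AddCommGroup Y] [Module ℂ Y] (NX : X → ℝ) (NY : Y → ℝ) (T : X →ₗ[ℂ] Y) : ℝ :=
  sInf {c | 0 ≤ c ∧ ∀ (k m : ℕ) (y : Fin k → (Y →ₗ[ℂ] ℂ)) (x : Fin m → X),
    lpsum 2 (fun j => lpsum s fun i => ‖(y i) (T (x j))‖) ≤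
      c * lpsum s (fun i => dualNorm NY (y i)) * weak2 NX x}

/-- The infinite-dimensional complex Hilbert sequence space ℓ₂. -/
abbrev ellTwo : Type := lp (fun _ : ℕ => ℂ) 2

/-- The k-th approximation number `a_k(T) = inf{‖T - R‖ : rank R < k}`. -/
def approxNum {X Y : Type*} [AddCommGroup X] [Module ℂ X] [AddCommGroup Y] [Module ℂ Y]
    (NX : X → ℝ) (NY : Y → ℝ) (k : ℕ) (T : X →ₗ[ℂ] Y) : ℝ :=
  sInf {t | ∃ R : X →ₗ[ℂ] Y, Module.rank ℂ (LinearMap.range R) < (k : Cardinal) ∧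
    t = opNorm NX NY (T - R)}

/-- The k-th Weyl number `x_k(T) = sup{a_k(T S) : S ∈ L(ℓ₂, X), ‖S‖ ≤ 1}`. -/
def weylNum {X Y : Type*} [AddCommGroup X] [Module ℂ X] [AddCommGroup Y] [Module ℂ Y]
    (NX : X → ℝ) (NY : Y → ℝ) (k : ℕ) (T : X →ₗ[ℂ] Y) : ℝ :=
  sSup {t | ∃ S : ellTwo →ₗ[ℂ] X, opNorm (fun z => ‖z‖) NX S ≤ 1 ∧
    t = approxNum (fun z => ‖z‖) NY k (T ∘ₗ S)}

/-- The singular values of a complex n×n matrix. -/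
def singularValues {n : ℕ} (A : Matrix (Fin n) (Fin n) ℂ) : Fin n → ℝ := fun i =>
  Real.sqrt ((Matrix.isHermitian_conjTranspose_mul_self A).eigenvalues i)

/-- The Schatten-u norm `‖A‖_{S_u^n} = (∑ s_i(A)^u)^{1/u}` (operator norm for u = ∞). -/
def schattenNorm (u : ℝ≥0∞) {n : ℕ} (A : Matrix (Fin n) (Fin n) ℂ) : ℝ :=
  lpsum u (singularValues A)

/-- A symmetric Banach sequence space: a Banach space `E ⊆ c₀` of complex sequences
in which the standard unit vectors form a symmetric (Schauder) basis. -/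
structure SymmSeqSpace where
  /-- membership in E -/
  Mem : (ℕ → ℂ) → Prop
  /-- the norm of E -/
  nrm : (ℕ → ℂ) → ℝ
  zero_mem : Mem 0
  add_mem : ∀ {x y}, Mem x → Mem y → Mem (x + y)
  smul_mem : ∀ (c : ℂ) {x}, Mem x → Mem (c • x)
  /-- E ⊆ c₀ -/
  tendsto_zero : ∀ {x}, Mem x → Filter.Tendsto x Filter.atTop (nhds 0)
  nrm_nonneg : ∀ x, 0 ≤ nrm x
  nrm_eq_zero : ∀ {x}, Mem x → (nrm x = 0 ↔ x = 0)
  nrm_add_le : ∀ {x y}, Mem x → Mem y → nrm (x + y) ≤ nrm x + nrm y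
  nrm_smul : ∀ (c : ℂ) (x), nrm (c • x) = ‖c‖ * nrm x
  /-- the unit vectors belong to E -/
  unit_mem : ∀ i : ℕ, Mem (Pi.single i 1)
  /-- symmetry of the basis: permutations and unimodular sign changes are isometric -/
  symm_mem : ∀ {x} (π : Equiv.Perm ℕ) (ε : ℕ → ℂ), (∀ i, ‖ε i‖ = 1) → Mem x →
    Mem (fun i => ε i * x (π i))
  symm : ∀ (x : ℕ → ℂ) (π : Equiv.Perm ℕ) (ε : ℕ → ℂ), (∀ i, ‖ε i‖ = 1) →
    nrm (fun i => ε i * x (π i)) = nrm x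
  /-- the unit vectors form a Schauder basis: finite sections converge -/
  basis : ∀ {x}, Mem x → Filter.Tendsto
    (fun n => nrm (x - fun i => if i < n then x i else 0)) Filter.atTop (nhds 0)
  /-- completeness -/
  complete : ∀ f : ℕ → (ℕ → ℂ), (∀ k, Mem (f k)) →
    (∀ ε > (0:ℝ), ∃ N, ∀ p q, N ≤ p → N ≤ q → nrm (f p - f q) < ε) →
    ∃ x, Mem x ∧ Filter.Tendsto (fun k => nrm (f k - x)) Filter.atTop (nhds 0)

/-- The norm of the n-th section `E_n = span{e_1,…,e_n}` of E, as a norm on ℂ^n. -/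
def SymmSeqSpace.nrmFin (E : SymmSeqSpace) {n : ℕ} (x : Fin n → ℂ) : ℝ :=
  E.nrm fun i => if h : i < n then x ⟨i, h⟩ else 0

/-- The unitary-ideal norm `‖A‖_{S_E^n} = ‖(s_i(A))‖_{E_n}`. -/
def SymmSeqSpace.schatten (E : SymmSeqSpace) {n : ℕ} (A : Matrix (Fin n) (Fin n) ℂ) : ℝ :=
  E.nrmFin fun i => ((singularValues A i : ℝ) : ℂ)

/-- p-convexity of a symmetric Banach sequence space (`p = ∞` allowed). -/
def pConvex (E : SymmSeqSpace) (p : ℝ≥0∞) : Prop :=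
  ∃ M > (0:ℝ), ∀ (m : ℕ) (x : Fin m → (ℕ → ℂ)), (∀ i, E.Mem (x i)) →
    E.nrm (fun j => ((lpsum p fun i => ‖x i j‖ : ℝ) : ℂ)) ≤ M * lpsum p fun i => E.nrm (x i)

/-- q-concavity of a symmetric Banach sequence space (`q = ∞` allowed). -/
def qConcave (E : SymmSeqSpace) (q : ℝ≥0∞) : Prop :=
  ∃ M > (0:ℝ), ∀ (m : ℕ) (x : Fin m → (ℕ → ℂ)), (∀ i, E.Mem (x i)) →
    lpsum q (fun i => E.nrm (x i)) ≤ M * E.nrm (fun j => ((lpsum q fun i => ‖x i j‖ : ℝ) : ℂ))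

/-- The complexification of a real n×n matrix, acting linearly on ℂ^n. -/
def mapC {n : ℕ} (g : Matrix (Fin n) (Fin n) ℝ) : (Fin n → ℂ) →ₗ[ℂ] (Fin n → ℂ) :=
  (g.map (Complex.ofReal)).mulVecLin

/-- `N` is a norm on ℂ^n. -/
def IsNorm {n : ℕ} (N : (Fin n → ℂ) → ℝ) : Prop :=
  (∀ x, N x = 0 ↔ x = 0) ∧ (∀ (c : ℂ) x, N (c • x) = ‖c‖ * N x) ∧
    ∀ x y, N (x + y) ≤ N x + N y

/-- `(ℂ^n, N)` has enough symmetries in the orthogonal group O(n): there is a compact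
subgroup `G ⊆ O(n)` acting isometrically on `L(ℂ^n, N)` by left and right composition
such that every operator commuting with `G` is a multiple of the identity. -/
def HasEnoughSymmetries {n : ℕ} (N : (Fin n → ℂ) → ℝ) : Prop :=
  ∃ G : Set (Matrix (Fin n) (Fin n) ℝ),
    (∀ g ∈ G, g * g.transpose = 1 ∧ g.transpose * g = 1) ∧
    (1 : Matrix (Fin n) (Fin n) ℝ) ∈ G ∧
    (∀ g ∈ G, ∀ g' ∈ G, g * g' ∈ G) ∧ (∀ g ∈ G, g.transpose ∈ G) ∧
    IsCompact G ∧
    (∀ u : (Fin n → ℂ) →ₗ[ℂ] (Fin n → ℂ), ∀ g ∈ G, ∀ g' ∈ G,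
      opNorm N N (mapC g ∘ₗ u ∘ₗ mapC g') = opNorm N N u) ∧
    (∀ u : (Fin n → ℂ) →ₗ[ℂ] (Fin n → ℂ),
      (∀ g ∈ G, u ∘ₗ mapC g = mapC g ∘ₗ u) → ∃ c : ℂ, u = c • LinearMap.id)

end

noncomputable section

section helpers

variable {p : ℝ≥0∞} {m : ℕ}

theorem lpsum_nonneg (hp : p ≠ ∞) (v : Fin m → ℝ) : 0 ≤ lpsum p v := by
  rw [lpsum, if_neg hp]
  exact Real.rpow_nonneg (Finset.sum_nonneg fun i _ => Real.rpow_nonneg (abs_nonneg _) _) _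

theorem lpsum_zero' (hp : p ≠ ∞) (ht : 0 < p.toReal) :
    lpsum p (fun _ : Fin m => (0:ℝ)) = 0 := by
  rw [lpsum, if_neg hp]
  simp [Real.zero_rpow ht.ne', Real.zero_rpow (by positivity : p.toReal⁻¹ ≠ 0)]

theorem lpsum_const (hp : p ≠ ∞) (ht : 0 < p.toReal) {a : ℝ} (ha : 0 ≤ a) :
    lpsum p (fun _ : Fin m => a) = (m:ℝ) ^ (1/p.toReal) * a := by
  rw [lpsum, if_neg hp]
  rw [Finset.sum_const, Finset.card_univ, Fintype.card_fin, nsmul_eq_mul,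
    Real.mul_rpow (by positivity) (by positivity), abs_of_nonneg ha,
    ← Real.rpow_mul ha, mul_one_div, div_self ht.ne', Real.rpow_one]

theorem lpsum_smul (hp : p ≠ ∞) (ht : 0 < p.toReal) {c : ℝ} (hc : 0 ≤ c) (v : Fin m → ℝ) :
    lpsum p (fun i => c * v i) = c * lpsum p v := by
  rw [lpsum, lpsum, if_neg hp, if_neg hp]
  have : ∀ i : Fin m, |c * v i| ^ p.toReal = c ^ p.toReal * |v i| ^ p.toReal := fun i => by
    rw [abs_mul, abs_of_nonneg hc, Real.mul_rpow hc (abs_nonneg _)]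
  simp_rw [this, ← Finset.mul_sum]
  rw [Real.mul_rpow (by positivity) (by positivity), ← Real.rpow_mul hc,
    mul_one_div, div_self ht.ne', Real.rpow_one]

theorem lpsum_comp_equiv (hp : p ≠ ∞) (v : Fin m → ℝ) (e : Equiv.Perm (Fin m)) :
    lpsum p (fun i => v (e i)) = lpsum p v := by
  rw [lpsum, lpsum, if_neg hp, if_neg hp]
  rw [show (∑ i, |v (e i)| ^ p.toReal) = ∑ i, |v i| ^ p.toReal from
    Equiv.sum_comp e (fun i => |v i| ^ p.toReal)]

/-- The canonical extension of `x : ℂ^n` to a sequence. -/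
def extFin {n : ℕ} (x : Fin n → ℂ) : ℕ → ℂ := fun i => if h : i < n then x ⟨i, h⟩ else 0

namespace SymmSeqSpace

variable (E : SymmSeqSpace)

theorem nrm_zero : E.nrm 0 = 0 := (E.nrm_eq_zero E.zero_mem).2 rfl

theorem nrm_perm (y : ℕ → ℂ) (σ : Equiv.Perm ℕ) : E.nrm (fun i => y (σ i)) = E.nrm y := by
  simpa using E.symm y σ (fun _ => 1) (fun _ => norm_one)

theorem mem_perm {y : ℕ → ℂ} (hy : E.Mem y) (σ : Equiv.Perm ℕ) :
    E.Mem (fun i => y (σ i)) := by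
  simpa using E.symm_mem σ (fun _ => 1) (fun _ => norm_one) hy

theorem mem_finsupp (s : Finset ℕ) (y : ℕ → ℂ) :
    E.Mem (fun i => if i ∈ s then y i else 0) := by
  classical
  induction s using Finset.induction with
  | empty => simp; exact E.zero_mem
  | @insert a s ha ih =>
    have h : (fun i => if i ∈ insert a s then y i else 0)
        = (y a • (Pi.single a 1 : ℕ → ℂ)) + (fun i => if i ∈ s then y i else 0) := by
      funext i
      by_cases hi : i = a
      · subst hi
        simp [ha, Pi.single_apply]
      · simp [hi, Pi.single_apply, Finset.mem_insert]
    rw [h]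
    exact E.add_mem (E.smul_mem _ (E.unit_mem a)) ih

theorem nrmFin_def {n : ℕ} (x : Fin n → ℂ) : E.nrmFin x = E.nrm (extFin x) := rfl

theorem mem_extFin {n : ℕ} (x : Fin n → ℂ) : E.Mem (extFin x) := by
  have h : extFin x = fun i => if i ∈ Finset.range n then extFin x i else 0 := by
    funext i
    by_cases hi : i < n <;> simp [extFin, hi]
  rw [h]
  exact E.mem_finsupp _ _

theorem extFin_smul' {n : ℕ} (c : ℂ) (x : Fin n → ℂ) :
    extFin (c • x) = c • extFin x := by
  funext i
  by_cases hi : i < n <;> simp [extFin, hi]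

theorem nrmFin_smul {n : ℕ} (c : ℂ) (x : Fin n → ℂ) :
    E.nrmFin (c • x) = ‖c‖ * E.nrmFin x := by
  rw [nrmFin_def, nrmFin_def, extFin_smul', E.nrm_smul]

theorem nrmFin_nonneg {n : ℕ} (x : Fin n → ℂ) : 0 ≤ E.nrmFin x := E.nrm_nonneg _

theorem nrmFin_zero {n : ℕ} : E.nrmFin (0 : Fin n → ℂ) = 0 := by
  rw [nrmFin_def, show extFin (0 : Fin n → ℂ) = 0 by funext i; by_cases hi : i < n <;> simp [extFin, hi]]
  exact E.nrm_zero

theorem lam_pos {n : ℕ} (hn : 0 < n) : 0 < E.nrmFin (fun _ : Fin n => (1:ℂ)) := by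
  rcases lt_or_eq_of_le (E.nrmFin_nonneg (fun _ : Fin n => (1:ℂ))) with h | h
  · exact h
  · exfalso
    have h0 : extFin (fun _ : Fin n => (1:ℂ)) = 0 :=
      (E.nrm_eq_zero (E.mem_extFin _)).1 h.symm
    have := congrFun h0 0
    simp [extFin, hn] at this

end SymmSeqSpace

theorem SymmSeqSpace.key (E : SymmSeqSpace) {n : ℕ} (hn : 0 < n) {p : ℝ≥0∞}
    (hp : p ≠ ∞) (ht : 0 < p.toReal) (x : Fin n → ℂ) :
    ∃ X : Fin n → (ℕ → ℂ),
      (∀ i, E.Mem (X i)) ∧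
      (fun j => ((lpsum p fun i => ‖X i j‖ : ℝ) : ℂ))
        = ((lpsum p fun i => ‖x i‖ : ℝ) : ℂ) • extFin (fun _ : Fin n => (1:ℂ)) ∧
      (fun i : Fin n => E.nrm (X i)) = fun _ : Fin n => E.nrmFin x := by
  haveI : NeZero n := ⟨hn.ne'⟩
  set σ : Fin n → Equiv.Perm ℕ := fun i => (Equiv.addLeft i).extendDomain Fin.equivSubtype
    with hσ
  have hval : ∀ (i : Fin n) (j : ℕ),
      extFin x (σ i j) = if h : j < n then x (i + ⟨j, h⟩) else 0 := by
    intro i j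
    by_cases h : j < n
    · rw [dif_pos h, hσ]
      rw [Equiv.Perm.extendDomain_apply_subtype (Equiv.addLeft i) Fin.equivSubtype h]
      simp [extFin, Fin.equivSubtype]
    · rw [dif_neg h, hσ]
      rw [Equiv.Perm.extendDomain_apply_not_subtype (Equiv.addLeft i) Fin.equivSubtype h]
      simp [extFin, h]
  refine ⟨fun i => fun j => extFin x (σ i j), fun i => E.mem_perm (E.mem_extFin x) (σ i),
    ?_, ?_⟩
  · funext j
    by_cases h : j < n
    · have h1 : (fun i : Fin n => ‖extFin x (σ i j)‖) = fun i => ‖x (i + ⟨j, h⟩)‖ := by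
        funext i; rw [hval, dif_pos h]
      have h2 : lpsum p (fun i : Fin n => ‖x (i + (⟨j, h⟩ : Fin n))‖)
          = lpsum p fun i => ‖x i‖ := by
        have := lpsum_comp_equiv hp (fun k : Fin n => ‖x k‖) (Equiv.addRight (⟨j, h⟩ : Fin n))
        simpa using this
      rw [h1, h2]
      simp [extFin, h]
    · have h1 : (fun i : Fin n => ‖extFin x (σ i j)‖) = fun _ => (0:ℝ) := by
        funext i; rw [hval, dif_neg h]; simp
      rw [h1, lpsum_zero' hp ht]
      simp [extFin, h]
  · funext i
    rw [E.nrmFin_def]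
    exact E.nrm_perm (extFin x) (σ i)

theorem opNorm_id_le {n : ℕ} {NX NY : (Fin n → ℂ) → ℝ} {B : ℝ}
    (hx0 : NX 0 ≤ 1) (h : ∀ x, NX x ≤ 1 → NY x ≤ B) :
    opNorm NX NY (LinearMap.id (R := ℂ) (M := Fin n → ℂ)) ≤ B := by
  rw [opNorm]
  refine csSup_le ⟨NY 0, ⟨0, hx0, rfl⟩⟩ ?_
  rintro t ⟨x, hx, rfl⟩
  exact h x hx

theorem le_opNorm_id {n : ℕ} {NX NY : (Fin n → ℂ) → ℝ} {B : ℝ}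
    (h : ∀ x, NX x ≤ 1 → NY x ≤ B) {x₀ : Fin n → ℂ} (hx₀ : NX x₀ ≤ 1) :
    NY x₀ ≤ opNorm NX NY (LinearMap.id (R := ℂ) (M := Fin n → ℂ)) := by
  refine le_csSup ⟨B, ?_⟩ ⟨x₀, hx₀, rfl⟩
  rintro t ⟨x, hx, rfl⟩
  exact h x hx

theorem SymmSeqSpace.nrm_indicator (E : SymmSeqSpace) {n : ℕ} {q : ℝ≥0∞} (hq : q ≠ ∞)
    (x : Fin n → ℂ) :
    E.nrm (((lpsum q fun i => ‖x i‖ : ℝ) : ℂ) • extFin (fun _ : Fin n => (1:ℂ)))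
      = lunorm q x * E.nrmFin (fun _ : Fin n => (1:ℂ)) := by
  rw [E.nrm_smul, ← E.nrmFin_def, Complex.norm_real, Real.norm_eq_abs,
    abs_of_nonneg (lpsum_nonneg hq _)]
  rfl

theorem SymmSeqSpace.conv_ineq (E : SymmSeqSpace) {n : ℕ} (hn : 0 < n) {q : ℝ≥0∞}
    (hq : q ≠ ∞) (ht : 0 < q.toReal) {M : ℝ}
    (h : ∀ (m : ℕ) (x : Fin m → (ℕ → ℂ)), (∀ i, E.Mem (x i)) →
      E.nrm (fun j => ((lpsum q fun i => ‖x i j‖ : ℝ) : ℂ))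
        ≤ M * lpsum q fun i => E.nrm (x i))
    (x : Fin n → ℂ) :
    lunorm q x * E.nrmFin (fun _ : Fin n => (1:ℂ))
      ≤ M * ((n:ℝ) ^ (1/q.toReal) * E.nrmFin x) := by
  obtain ⟨X, hmem, hB, hC⟩ := E.key hn hq ht x
  have h0 := h n X hmem
  rw [hB, hC, E.nrm_indicator hq, lpsum_const hq ht (E.nrmFin_nonneg x)] at h0
  exact h0

theorem SymmSeqSpace.conc_ineq (E : SymmSeqSpace) {n : ℕ} (hn : 0 < n) {q : ℝ≥0∞}
    (hq : q ≠ ∞) (ht : 0 < q.toReal) {M : ℝ}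
    (h : ∀ (m : ℕ) (x : Fin m → (ℕ → ℂ)), (∀ i, E.Mem (x i)) →
      lpsum q (fun i => E.nrm (x i))
        ≤ M * E.nrm (fun j => ((lpsum q fun i => ‖x i j‖ : ℝ) : ℂ)))
    (x : Fin n → ℂ) :
    (n:ℝ) ^ (1/q.toReal) * E.nrmFin x
      ≤ M * (lunorm q x * E.nrmFin (fun _ : Fin n => (1:ℂ))) := by
  obtain ⟨X, hmem, hB, hC⟩ := E.key hn hq ht x
  have h0 := h n X hmem
  rw [hB, hC, E.nrm_indicator hq, lpsum_const hq ht (E.nrmFin_nonneg x)] at h0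
  exact h0

theorem lunorm_smul {n : ℕ} {q : ℝ≥0∞} (hq : q ≠ ∞) (ht : 0 < q.toReal)
    (c : ℂ) (x : Fin n → ℂ) : lunorm q (c • x) = ‖c‖ * lunorm q x := by
  have h1 : (fun i => ‖(c • x) i‖) = fun i => ‖c‖ * ‖x i‖ := by
    funext i; simp [norm_mul]
  rw [lunorm, h1, lpsum_smul hq ht (norm_nonneg c)]
  rfl

theorem lunorm_ones {n : ℕ} {q : ℝ≥0∞} (hq : q ≠ ∞) (ht : 0 < q.toReal) :
    lunorm q (fun _ : Fin n => (1:ℂ)) = (n:ℝ) ^ (1/q.toReal) := by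
  have h1 : (fun i : Fin n => ‖(1:ℂ)‖) = fun _ : Fin n => (1:ℝ) := by funext i; simp
  rw [lunorm, h1, lpsum_const hq ht zero_le_one, mul_one]

theorem lunorm_zero {n : ℕ} {q : ℝ≥0∞} (hq : q ≠ ∞) (ht : 0 < q.toReal) :
    lunorm q (0 : Fin n → ℂ) = 0 := by
  have h1 : (fun i : Fin n => ‖(0 : Fin n → ℂ) i‖) = fun _ : Fin n => (0:ℝ) := by
    funext i; simp
  rw [lunorm, h1, lpsum_zero' hq ht]

end helpers

/-- Lemma 7, formulas (14)/(15): for a u-convex and u'-concave symmetric Banach sequence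
space `E` (`1 ≤ u ≤ 2`, `1/u + 1/u' = 1`), one has
`‖id : E_n → ℓ_u^n‖ ≍ n^{1/u} / ‖∑_{i≤n} e_i‖_{E_n}`, and if `E` is moreover 2-concave,
also `‖id : E_n → ℓ_u^n‖ ≍ n^{1/u−1/2} / ‖id : ℓ_2^n → E_n‖`. -/
theorem norm_section_into_lu (u u' : ℝ≥0∞) (hu1 : 1 ≤ u) (hu2 : u ≤ 2) (hu'1 : 1 ≤ u')
    (hconj : 1 / u.toReal + 1 / u'.toReal = 1)
    (E : SymmSeqSpace) (hconv : pConvex E u) (hconc : qConcave E u') :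
    (∃ c > (0:ℝ), ∀ n : ℕ, 0 < n →
      c⁻¹ * ((n : ℝ) ^ (1 / u.toReal) / E.nrmFin (fun _ : Fin n => (1:ℂ))) ≤
        opNorm (E.nrmFin (n := n)) (lunorm u) LinearMap.id ∧
      opNorm (E.nrmFin (n := n)) (lunorm u) LinearMap.id ≤
        c * ((n : ℝ) ^ (1 / u.toReal) / E.nrmFin (fun _ : Fin n => (1:ℂ)))) ∧
    (qConcave E 2 → ∃ c > (0:ℝ), ∀ n : ℕ, 0 < n →
      c⁻¹ * ((n : ℝ) ^ (1 / u.toReal - 1 / 2) /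
          opNorm (lunorm 2) (E.nrmFin (n := n)) LinearMap.id) ≤
        opNorm (E.nrmFin (n := n)) (lunorm u) LinearMap.id ∧
      opNorm (E.nrmFin (n := n)) (lunorm u) LinearMap.id ≤
        c * ((n : ℝ) ^ (1 / u.toReal - 1 / 2) /
          opNorm (lunorm 2) (E.nrmFin (n := n)) LinearMap.id)) := by
  obtain ⟨M, hM, hMc⟩ := hconv
  have huf : u ≠ ∞ := (lt_of_le_of_lt hu2 (by norm_num)).ne
  have htu : 0 < u.toReal := by
    have h1 : (1:ℝ≥0∞).toReal ≤ u.toReal := ENNReal.toReal_mono huf hu1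
    simp only [ENNReal.toReal_one] at h1
    linarith
  have P1 : ∀ n : ℕ, 0 < n →
      ((n:ℝ) ^ (1/u.toReal) / E.nrmFin (fun _ : Fin n => (1:ℂ))
        ≤ opNorm (E.nrmFin (n := n)) (lunorm u) LinearMap.id ∧
       opNorm (E.nrmFin (n := n)) (lunorm u) LinearMap.id
        ≤ M * ((n:ℝ) ^ (1/u.toReal) / E.nrmFin (fun _ : Fin n => (1:ℂ)))) := by
    intro n hn
    set lam := E.nrmFin (fun _ : Fin n => (1:ℂ)) with hlam
    have hlpos : 0 < lam := E.lam_pos hn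
    have hnp : (0:ℝ) < n := Nat.cast_pos.mpr hn
    have hν : (0:ℝ) < (n:ℝ) ^ (1/u.toReal) := Real.rpow_pos_of_pos hnp _
    have hub : ∀ x : Fin n → ℂ, E.nrmFin x ≤ 1 →
        lunorm u x ≤ M * ((n:ℝ) ^ (1/u.toReal) / lam) := by
      intro x hx
      have h1 := E.conv_ineq hn huf htu hMc x
      have h2 : M * ((n:ℝ)^(1/u.toReal) * E.nrmFin x) ≤ M * (n:ℝ)^(1/u.toReal) := by
        have h3 : (n:ℝ)^(1/u.toReal) * E.nrmFin x ≤ (n:ℝ)^(1/u.toReal) * 1 :=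
          mul_le_mul_of_nonneg_left hx hν.le
        rw [mul_one] at h3
        exact mul_le_mul_of_nonneg_left h3 hM.le
      rw [mul_div_assoc']
      exact (le_div_iff₀ hlpos).mpr (h1.trans h2)
    have h0 : E.nrmFin (0 : Fin n → ℂ) ≤ 1 := by rw [E.nrmFin_zero]; norm_num
    constructor
    · have hx₀ : E.nrmFin (((lam⁻¹ : ℝ):ℂ) • (fun _ : Fin n => (1:ℂ))) = 1 := by
        rw [E.nrmFin_smul, Complex.norm_real, Real.norm_eq_abs,
          abs_of_nonneg (inv_nonneg.mpr hlpos.le), inv_mul_cancel₀ hlpos.ne']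
      have hval : lunorm u (((lam⁻¹ : ℝ):ℂ) • (fun _ : Fin n => (1:ℂ)))
          = (n:ℝ)^(1/u.toReal) / lam := by
        rw [lunorm_smul huf htu, lunorm_ones huf htu, Complex.norm_real,
          Real.norm_eq_abs, abs_of_nonneg (inv_nonneg.mpr hlpos.le), inv_mul_eq_div]
      have := le_opNorm_id hub hx₀.le
      rwa [hval] at this
    · exact opNorm_id_le h0 hub
  have hMne : M ≤ max M 1 := le_max_left M 1
  have hc1 : (1:ℝ) ≤ max M 1 := le_max_right M 1
  refine ⟨⟨max M 1, lt_of_lt_of_le one_pos hc1, fun n hn => ?_⟩, ?_⟩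
  · obtain ⟨hlo, hhi⟩ := P1 n hn
    have hq : 0 ≤ (n:ℝ) ^ (1/u.toReal) / E.nrmFin (fun _ : Fin n => (1:ℂ)) :=
      div_nonneg (Real.rpow_nonneg (Nat.cast_nonneg n) _) (E.nrmFin_nonneg _)
    constructor
    · calc (max M 1)⁻¹ * ((n:ℝ) ^ (1/u.toReal) / E.nrmFin (fun _ : Fin n => (1:ℂ)))
          ≤ 1 * ((n:ℝ) ^ (1/u.toReal) / E.nrmFin (fun _ : Fin n => (1:ℂ))) := by
            apply mul_le_mul_of_nonneg_right _ hq
            exact inv_le_one_of_one_le₀ hc1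
        _ ≤ _ := by rw [one_mul]; exact hlo
    · exact hhi.trans (mul_le_mul_of_nonneg_right hMne hq)
  · intro h2conc
    obtain ⟨M₂, hM₂, hM₂c⟩ := h2conc
    have h2f : (2:ℝ≥0∞) ≠ ∞ := by norm_num
    have h2t : (2:ℝ≥0∞).toReal = 2 := by simp
    have ht2 : 0 < (2:ℝ≥0∞).toReal := by rw [h2t]; norm_num
    have P2 : ∀ n : ℕ, 0 < n →
        (E.nrmFin (fun _ : Fin n => (1:ℂ)) / (n:ℝ) ^ (1/(2:ℝ≥0∞).toReal)
          ≤ opNorm (lunorm 2) (E.nrmFin (n := n)) LinearMap.id ∧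
         opNorm (lunorm 2) (E.nrmFin (n := n)) LinearMap.id
          ≤ M₂ * (E.nrmFin (fun _ : Fin n => (1:ℂ)) / (n:ℝ) ^ (1/(2:ℝ≥0∞).toReal))) := by
      intro n hn
      set lam := E.nrmFin (fun _ : Fin n => (1:ℂ)) with hlam
      have hlpos : 0 < lam := E.lam_pos hn
      have hnp : (0:ℝ) < n := Nat.cast_pos.mpr hn
      have hs : (0:ℝ) < (n:ℝ) ^ (1/(2:ℝ≥0∞).toReal) := Real.rpow_pos_of_pos hnp _
      have hub : ∀ x : Fin n → ℂ, lunorm 2 x ≤ 1 →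
          E.nrmFin x ≤ M₂ * (lam / (n:ℝ) ^ (1/(2:ℝ≥0∞).toReal)) := by
        intro x hx
        have h1 := E.conc_ineq hn h2f ht2 hM₂c x
        have h1' : (n:ℝ) ^ (1/(2:ℝ≥0∞).toReal) * E.nrmFin x ≤ M₂ * lam := by
          have hl0 : 0 ≤ lunorm (2:ℝ≥0∞) x := lpsum_nonneg h2f _
          have h3 : lunorm (2:ℝ≥0∞) x * lam ≤ 1 * lam :=
            mul_le_mul_of_nonneg_right hx hlpos.le
          rw [one_mul] at h3
          exact h1.trans (mul_le_mul_of_nonneg_left h3 hM₂.le)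
        rw [mul_div_assoc']
        rw [le_div_iff₀ hs, mul_comm]
        exact h1'
      have h0 : lunorm (2:ℝ≥0∞) (0 : Fin n → ℂ) ≤ 1 := by
        rw [lunorm_zero h2f ht2]; norm_num
      constructor
      · have hx₁ : lunorm (2:ℝ≥0∞) ((((((n:ℝ) ^ (1/(2:ℝ≥0∞).toReal))⁻¹ : ℝ)):ℂ) •
            (fun _ : Fin n => (1:ℂ))) = 1 := by
          rw [lunorm_smul h2f ht2, lunorm_ones h2f ht2, Complex.norm_real,
            Real.norm_eq_abs, abs_of_nonneg (inv_nonneg.mpr hs.le), inv_mul_cancel₀ hs.ne']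
        have hval : E.nrmFin ((((((n:ℝ) ^ (1/(2:ℝ≥0∞).toReal))⁻¹ : ℝ)):ℂ) •
            (fun _ : Fin n => (1:ℂ))) = lam / (n:ℝ) ^ (1/(2:ℝ≥0∞).toReal) := by
          rw [E.nrmFin_smul, Complex.norm_real, Real.norm_eq_abs,
            abs_of_nonneg (inv_nonneg.mpr hs.le), inv_mul_eq_div]
        have := le_opNorm_id hub hx₁.le
        rwa [hval] at this
      · exact opNorm_id_le h0 hub
    refine ⟨max (M * M₂) 1, lt_of_lt_of_le one_pos (le_max_right _ _), fun n hn => ?_⟩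
    obtain ⟨hAlo, hAhi⟩ := P1 n hn
    obtain ⟨hKlo, hKhi⟩ := P2 n hn
    set lam := E.nrmFin (fun _ : Fin n => (1:ℂ)) with hlam
    set A := opNorm (E.nrmFin (n := n)) (lunorm u) LinearMap.id with hA
    set K := opNorm (lunorm 2) (E.nrmFin (n := n)) LinearMap.id with hK
    have hlpos : 0 < lam := E.lam_pos hn
    have hnp : (0:ℝ) < n := Nat.cast_pos.mpr hn
    have hs : (0:ℝ) < (n:ℝ) ^ (1/(2:ℝ≥0∞).toReal) := Real.rpow_pos_of_pos hnp _
    have hKpos : 0 < K := lt_of_lt_of_le (div_pos hlpos hs) hKlo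
    have he : (0:ℝ) < (n:ℝ) ^ (1 / u.toReal - 1 / 2) := Real.rpow_pos_of_pos hnp _
    have hns : (n:ℝ) ^ (1 / u.toReal - 1 / 2) * (n:ℝ) ^ (1/(2:ℝ≥0∞).toReal)
        = (n:ℝ) ^ (1/u.toReal) := by
      rw [h2t, ← Real.rpow_add hnp]
      norm_num
    constructor
    · have h1 : (n:ℝ) ^ (1 / u.toReal - 1 / 2) / K
          ≤ (n:ℝ) ^ (1/u.toReal) / lam := by
        rw [div_le_div_iff₀ hKpos hlpos, ← hns]
        calc (n:ℝ) ^ (1 / u.toReal - 1 / 2) * lam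
            = (n:ℝ) ^ (1 / u.toReal - 1 / 2) * ((lam / (n:ℝ) ^ (1/(2:ℝ≥0∞).toReal))
                * (n:ℝ) ^ (1/(2:ℝ≥0∞).toReal)) := by
              rw [div_mul_cancel₀ _ hs.ne']
          _ ≤ (n:ℝ) ^ (1 / u.toReal - 1 / 2) * (K * (n:ℝ) ^ (1/(2:ℝ≥0∞).toReal)) := by
              apply mul_le_mul_of_nonneg_left _ he.le
              exact mul_le_mul_of_nonneg_right hKlo hs.le
          _ = (n:ℝ) ^ (1 / u.toReal - 1 / 2) * (n:ℝ) ^ (1/(2:ℝ≥0∞).toReal) * K := by ring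
      calc (max (M * M₂) 1)⁻¹ * ((n:ℝ) ^ (1 / u.toReal - 1 / 2) / K)
          ≤ 1 * ((n:ℝ) ^ (1 / u.toReal - 1 / 2) / K) := by
            apply mul_le_mul_of_nonneg_right _ (div_nonneg he.le hKpos.le)
            exact inv_le_one_of_one_le₀ (le_max_right _ _)
        _ = (n:ℝ) ^ (1 / u.toReal - 1 / 2) / K := one_mul _
        _ ≤ (n:ℝ) ^ (1/u.toReal) / lam := h1
        _ ≤ A := hAlo
    · have h2 : (n:ℝ) ^ (1/u.toReal) / lam
          ≤ M₂ * ((n:ℝ) ^ (1 / u.toReal - 1 / 2) / K) := by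
        rw [mul_div_assoc', div_le_div_iff₀ hlpos hKpos, ← hns]
        have hKs : K * (n:ℝ) ^ (1/(2:ℝ≥0∞).toReal) ≤ M₂ * lam := by
          have := mul_le_mul_of_nonneg_right hKhi hs.le
          rwa [mul_assoc, div_mul_cancel₀ _ hs.ne'] at this
        calc (n:ℝ) ^ (1 / u.toReal - 1 / 2) * (n:ℝ) ^ (1/(2:ℝ≥0∞).toReal) * K
            = (n:ℝ) ^ (1 / u.toReal - 1 / 2) * (K * (n:ℝ) ^ (1/(2:ℝ≥0∞).toReal)) := by ring
          _ ≤ (n:ℝ) ^ (1 / u.toReal - 1 / 2) * (M₂ * lam) := by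
              exact mul_le_mul_of_nonneg_left hKs he.le
          _ = M₂ * (n:ℝ) ^ (1 / u.toReal - 1 / 2) * lam := by ring
      have hQ : 0 ≤ (n:ℝ) ^ (1 / u.toReal - 1 / 2) / K := div_nonneg he.le hKpos.le
      calc A ≤ M * ((n:ℝ) ^ (1/u.toReal) / lam) := hAhi
        _ ≤ M * (M₂ * ((n:ℝ) ^ (1 / u.toReal - 1 / 2) / K)) := by
            exact mul_le_mul_of_nonneg_left h2 hM.le
        _ = (M * M₂) * ((n:ℝ) ^ (1 / u.toReal - 1 / 2) / K) := by ring
        _ ≤ max (M * M₂) 1 * ((n:ℝ) ^ (1 / u.toReal - 1 / 2) / K) :=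
            mul_le_mul_of_nonneg_right (le_max_left _ _) hQ
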